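/- arXiv:2102.11226 — 3 statements merged into one kernel-verified Lean document; each statement's English description precedes it below -/
import Mathlib

section
/- Let X be a strictly convex normed plane and let τ : C_X → C_X be an isometry of a convex Jordan curve C_X ⊂ X = ℝ² onto itself such that τ(a) − τ(b) = a − b whenever a, b ∈ C_X lie on a common horizontal or vertical line. Suppose a, b ∈ C_X and there exist points a^{i₁}, a^{i₂}, a^{i₃}, a^{i₄} in the orbit of a under the 'reflection along coordinate lines' process and b^{j₁}, b^{j₂}, b^{j₃}, b^{j₄} in the corresponding orbit of b such that a^{i_k} − b^{j_k} lies in the (open) k-th quadrant for k = 1,2,3,4. Then τ(a) − τ(b) = a − b. -/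
/-- In a strictly convex normed plane, for every `v ≠ 0` there is a (closed) half-plane
`{u : 0 ≤ φ·u}` on which `N u < N (u + v)`. -/
lemma key_lemma (N : ℝ × ℝ → ℝ)
    (hN0 : ∀ p, N p = 0 ↔ p = 0)
    (hNneg : ∀ p, N (-p) = N p)
    (hNsmul : ∀ (r : ℝ) (p), N (r • p) = |r| * N p)
    (hNadd : ∀ p q, N (p + q) ≤ N p + N q)
    (hstrict : ∀ p q, p ≠ 0 → q ≠ 0 → N (p + q) = N p + N q → ∃ r > (0:ℝ), q = r • p)
    (v : ℝ × ℝ) (hv : v ≠ 0) :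
    ∃ φ : ℝ × ℝ, ∀ u : ℝ × ℝ, 0 ≤ φ.1 * u.1 + φ.2 * u.2 → N u < N (u + v) := by
  -- basic positivity facts
  have hN0' : N 0 = 0 := (hN0 0).mpr rfl
  have hNnonneg : ∀ p, 0 ≤ N p := by
    intro p
    have h := hNadd p (-p)
    rw [add_neg_cancel, hN0', hNneg] at h
    linarith
  have hpos : ∀ p : ℝ × ℝ, p ≠ 0 → 0 < N p := by
    intro p hp
    rcases (hNnonneg p).eq_or_lt with h | h
    · exact absurd ((hN0 p).mp h.symm) hp
    · exact h
  have hNv : 0 < N v := hpos v hv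
  set w : ℝ × ℝ := (-v.2, v.1) with hw
  -- the function t ↦ N (w + t • v) is Lipschitz hence continuous
  have hlip : ∀ t s : ℝ, N (w + t • v) - N (w + s • v) ≤ N v * |t - s| := by
    intro t s
    have e : w + t • v = (w + s • v) + (t - s) • v := by module
    have h3 := hNadd (w + s • v) ((t - s) • v)
    rw [← e, hNsmul] at h3
    nlinarith [abs_nonneg (t - s)]
  have hcont : Continuous (fun t : ℝ => N (w + t • v)) := by
    have : LipschitzWith ⟨N v, hNv.le⟩ (fun t : ℝ => N (w + t • v)) := by
      apply LipschitzWith.of_dist_le_mul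
      intro t s
      rw [Real.dist_eq, Real.dist_eq]
      show |N (w + t • v) - N (w + s • v)| ≤ N v * |t - s|
      exact abs_sub_le_iff.mpr ⟨hlip t s, by have h2 := hlip s t; rwa [abs_sub_comm] at h2⟩
    exact this.continuous
  -- minimize over a large compact interval
  set M : ℝ := (N (w + (0:ℝ) • v) + N w + 1) / N v with hM
  have hM0 : 0 < M := by
    apply div_pos _ hNv
    have := hNnonneg (w + (0:ℝ) • v); have := hNnonneg w; linarith
  have hMNv : M * N v = N (w + (0:ℝ) • v) + N w + 1 := div_mul_cancel₀ _ (ne_of_gt hNv)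
  obtain ⟨t0, ht0mem, ht0min⟩ := isCompact_Icc.exists_isMinOn (s := Set.Icc (-M) M)
    ⟨0, by constructor <;> linarith⟩ hcont.continuousOn
  have hglobal : ∀ t : ℝ, N (w + t0 • v) ≤ N (w + t • v) := by
    intro t
    by_cases hc : |t| ≤ M
    · exact isMinOn_iff.mp ht0min t (abs_le.mp hc)
    · push_neg at hc
      have hlow : |t| * N v ≤ N (w + t • v) + N w := by
        have h3 := hNadd (w + t • v) (-w)
        have e : w + t • v + -w = t • v := by module
        rw [e, hNsmul, hNneg] at h3
        linarith
      have h0 : N (w + t0 • v) ≤ N (w + (0:ℝ) • v) :=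
        isMinOn_iff.mp ht0min 0 ⟨by linarith, by linarith⟩
      have h1 : M * N v < |t| * N v := mul_lt_mul_of_pos_right hc hNv
      nlinarith [hNnonneg (w + t • v)]
  set d : ℝ × ℝ := w + t0 • v with hd
  have hdmin : ∀ t : ℝ, N d ≤ N (d + t • v) := by
    intro t
    have e : d + t • v = w + (t0 + t) • v := by rw [hd]; module
    rw [e]
    exact hglobal (t0 + t)
  have hd0 : d ≠ 0 := by
    intro hdd
    have e1 : d.1 = -v.2 + t0 * v.1 := by simp [hd, hw]
    have e2 : d.2 = v.1 + t0 * v.2 := by simp [hd, hw]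
    rw [hdd] at e1 e2
    simp at e1 e2
    apply hv
    have h5 : v.1 * (1 + t0 ^ 2) = 0 := by linear_combination (-t0) * e1 - e2
    have h6 : (1:ℝ) + t0 ^ 2 ≠ 0 := by positivity
    have hv1 : v.1 = 0 := (mul_eq_zero.mp h5).resolve_right h6
    have hv2 : v.2 = 0 := by linear_combination e1 + t0 * hv1
    exact Prod.ext_iff.mpr ⟨hv1, hv2⟩
  have hNd : 0 < N d := hpos d hd0
  have hnotpar : ∀ c : ℝ, d ≠ c • v := by
    intro c hc
    have h3 := hdmin (-c)
    have e : d + (-c) • v = 0 := by rw [hc]; module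
    rw [e, hN0'] at h3
    linarith
  have hD : d.1 * v.2 - d.2 * v.1 ≠ 0 := by
    intro hDD
    by_cases hv1 : v.1 = 0
    · have hv2 : v.2 ≠ 0 := by
        intro h2; exact hv (Prod.ext_iff.mpr ⟨hv1, h2⟩)
      have hd1 : d.1 = 0 := by
        have : d.1 * v.2 = 0 := by rw [hv1] at hDD; linarith
        exact (mul_eq_zero.mp this).resolve_right hv2
      apply hnotpar (d.2 / v.2)
      apply Prod.ext_iff.mpr
      constructor
      · simp [hv1, hd1]
      · simp [div_mul_cancel₀ _ hv2]
    · apply hnotpar (d.1 / v.1)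
      apply Prod.ext_iff.mpr
      constructor
      · simp [div_mul_cancel₀ _ hv1]
      · have h7 : d.2 = d.1 / v.1 * v.2 := by field_simp; linarith
        simpa using h7
  -- the functional
  refine ⟨if 0 < d.1 * v.2 - d.2 * v.1 then (-d.2, d.1) else (d.2, -d.1), ?_⟩
  intro u hu
  -- coordinates of u in the basis (d, v)
  set s : ℝ := (u.1 * v.2 - u.2 * v.1) / (d.1 * v.2 - d.2 * v.1) with hs_def
  set t : ℝ := (d.1 * u.2 - d.2 * u.1) / (d.1 * v.2 - d.2 * v.1) with ht_def
  have ht : 0 ≤ t := by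
    by_cases hDp : 0 < d.1 * v.2 - d.2 * v.1
    · rw [if_pos hDp] at hu
      simp only at hu
      apply div_nonneg _ hDp.le
      linarith
    · rw [if_neg hDp] at hu
      simp only at hu
      have hDn : d.1 * v.2 - d.2 * v.1 < 0 := (not_lt.mp hDp).lt_of_ne hD
      exact div_nonneg_iff.mpr (Or.inr ⟨by linarith, hDn.le⟩)
  have hst : u = s • d + t • v := by
    apply Prod.ext_iff.mpr
    constructor
    · show u.1 = (s • d + t • v).1
      simp only [Prod.fst_add, Prod.smul_fst, smul_eq_mul, hs_def, ht_def]
      rw [div_mul_eq_mul_div, div_mul_eq_mul_div, ← add_div, eq_div_iff hD]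
      ring
    · show u.2 = (s • d + t • v).2
      simp only [Prod.snd_add, Prod.smul_snd, smul_eq_mul, hs_def, ht_def]
      rw [div_mul_eq_mul_div, div_mul_eq_mul_div, ← add_div, eq_div_iff hD]
      ring
  have e2 : u + v = s • d + (t + 1) • v := by rw [hst]; module
  rcases eq_or_ne s 0 with hs | hs
  · -- u is a nonnegative multiple of v
    rw [hs] at hst
    have e1 : (0:ℝ) • d + t • v = t • v := by module
    have e3 : u + v = (t + 1) • v := by rw [e2, hs]; module
    rw [e3, hst, e1, hNsmul, hNsmul, abs_of_nonneg ht, abs_of_nonneg (by linarith : (0:ℝ) ≤ t + 1)]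
    nlinarith
  · -- the generic case: use convexity and strict convexity along the line s•d + ℝ•v
    have key1 : ∀ r : ℝ, |s| * N d ≤ N (s • d + r • v) := by
      intro r
      have e : s • (d + (r / s) • v) = s • d + r • v := by
        rw [smul_add, smul_smul, mul_div_cancel₀ _ hs]
      calc |s| * N d ≤ |s| * N (d + (r / s) • v) :=
            mul_le_mul_of_nonneg_left (hdmin _) (abs_nonneg s)
        _ = N (s • (d + (r / s) • v)) := (hNsmul s _).symm
        _ = N (s • d + r • v) := by rw [e]
    have hg0 : 0 < |s| * N d := mul_pos (abs_pos.mpr hs) hNd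
    have mono : ∀ x y : ℝ, 0 ≤ x → x ≤ y → N (s • d + x • v) ≤ N (s • d + y • v) := by
      intro x y hx hxy
      rcases hx.eq_or_lt with h0 | h0
      · have e : s • d + x • v = s • d := by rw [← h0]; module
        rw [e, hNsmul]
        exact key1 y
      · have hy : 0 < y := lt_of_lt_of_le h0 hxy
        have hy' : y ≠ 0 := ne_of_gt hy
        set l : ℝ := x / y with hl
        have hl0 : 0 < l := div_pos h0 hy
        have hl1 : l ≤ 1 := (div_le_one hy).mpr hxy
        have e : s • d + x • v = (1 - l) • (s • d) + l • (s • d + y • v) := by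
          rw [hl]
          match_scalars
          · field_simp
            ring
          · field_simp
            ring
        have hcalc : N (s • d + x • v) ≤ (1 - l) * (|s| * N d) + l * N (s • d + y • v) := by
          calc N (s • d + x • v) = N ((1 - l) • (s • d) + l • (s • d + y • v)) := by rw [e]
            _ ≤ N ((1 - l) • (s • d)) + N (l • (s • d + y • v)) := hNadd _ _
            _ = (1 - l) * (|s| * N d) + l * N (s • d + y • v) := by
                have r1 : N ((1 - l) • (s • d)) = (1 - l) * N (s • d) := by
                  rw [hNsmul, abs_of_nonneg (by linarith : (0:ℝ) ≤ 1 - l)]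
                have r2 : N (l • (s • d + y • v)) = l * N (s • d + y • v) := by
                  rw [hNsmul, abs_of_nonneg hl0.le]
                rw [r1, r2, hNsmul s d]
        nlinarith [key1 x, hl0, hl1]
    rw [e2, hst]
    by_contra hcon
    push_neg at hcon
    have hmon := mono t (t + 1) ht (by linarith)
    have heq : N (s • d + (t + 1) • v) = N (s • d + t • v) := le_antisymm hcon hmon
    have hsum : (s • d + t • v) + (s • d + (t + 1) • v) = (2:ℝ) • (s • d + (t + 1/2) • v) := by
      module
    have hmid_le : N (s • d + (t + 1/2) • v) ≤ N (s • d + t • v) := by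
      have h3 := hNadd (s • d + t • v) (s • d + (t + 1) • v)
      rw [hsum, hNsmul, heq] at h3
      rw [show |(2:ℝ)| = 2 by norm_num] at h3
      linarith
    have hmid_ge := mono t (t + 1/2) ht (by linarith)
    have hmid : N (s • d + (t + 1/2) • v) = N (s • d + t • v) := le_antisymm hmid_le hmid_ge
    have hNt : 0 < N (s • d + t • v) := lt_of_lt_of_le hg0 (key1 t)
    have hp1 : s • d + t • v ≠ 0 := by
      intro h0
      rw [h0, hN0'] at hNt
      exact lt_irrefl 0 hNt
    have hp2 : s • d + (t + 1) • v ≠ 0 := by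
      intro h0
      rw [h0, hN0'] at heq
      linarith
    have htr : N ((s • d + t • v) + (s • d + (t + 1) • v))
        = N (s • d + t • v) + N (s • d + (t + 1) • v) := by
      rw [hsum, hNsmul, show |(2:ℝ)| = 2 by norm_num, hmid, heq]
      ring
    obtain ⟨r, hr, hreq⟩ := hstrict _ _ hp1 hp2 htr
    rcases eq_or_ne r 1 with h1 | h1
    · rw [h1, one_smul] at hreq
      apply hv
      have hv0 : v = (s • d + (t + 1) • v) - (s • d + t • v) := by module
      rw [hreq] at hv0
      simpa using hv0
    · have hc1 : s * d.1 + (t + 1) * v.1 = r * (s * d.1) + r * (t * v.1) := by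
        have := congrArg Prod.fst hreq
        simpa [Prod.fst_add, Prod.smul_fst, smul_eq_mul] using this
      have hc2 : s * d.2 + (t + 1) * v.2 = r * (s * d.2) + r * (t * v.2) := by
        have := congrArg Prod.snd hreq
        simpa [Prod.snd_add, Prod.smul_snd, smul_eq_mul] using this
      have hzero : ((1:ℝ) - r) * s * (d.1 * v.2 - d.2 * v.1) = 0 := by
        linear_combination v.2 * hc1 - v.1 * hc2
      have h1r : (1:ℝ) - r ≠ 0 := fun hh => h1 (by linarith)
      exact (mul_ne_zero (mul_ne_zero h1r hs) hD) hzero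
/-- Along an orbit of the coordinate-line reflection process, `τ (A n) - A n` is constant. -/
lemma orbit_invariant (τ : ℝ × ℝ → ℝ × ℝ) (CX : Set (ℝ × ℝ))
    (hlines : ∀ u ∈ CX, ∀ v ∈ CX, (u.1 = v.1 ∨ u.2 = v.2) → τ u - τ v = u - v)
    (A : ℤ → ℝ × ℝ)
    (hA : ∀ n : ℤ, A n ∈ CX ∧ ((A (n+1)).1 = (A n).1 ∨ (A (n+1)).2 = (A n).2)) :
    ∀ n : ℤ, τ (A n) - A n = τ (A 0) - A 0 := by
  intro n
  induction n using Int.induction_on with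
  | zero => rfl
  | succ k ih =>
      have hstep := hlines (A ((k:ℤ)+1)) (hA ((k:ℤ)+1)).1 (A (k:ℤ)) (hA (k:ℤ)).1 (hA (k:ℤ)).2
      have e : τ (A ((k:ℤ)+1)) - A ((k:ℤ)+1)
          = (τ (A ((k:ℤ)+1)) - τ (A (k:ℤ))) + (τ (A (k:ℤ)) - A (k:ℤ)) - (A ((k:ℤ)+1) - A (k:ℤ)) := by
        abel
      rw [e, hstep, ih]
      abel
  | pred k ih =>
      have h2 : (-(k:ℤ) - 1) + 1 = -(k:ℤ) := by ring
      have hAk := hA (-(k:ℤ) - 1)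
      rw [h2] at hAk
      have hstep := hlines (A (-(k:ℤ))) (hA (-(k:ℤ))).1 (A (-(k:ℤ)-1)) (hA (-(k:ℤ)-1)).1 hAk.2
      have e : τ (A (-(k:ℤ)-1)) - A (-(k:ℤ)-1)
          = (τ (A (-(k:ℤ))) - A (-(k:ℤ))) - (τ (A (-(k:ℤ))) - τ (A (-(k:ℤ)-1)))
            + (A (-(k:ℤ)) - A (-(k:ℤ)-1)) := by abel
      rw [e, hstep, ih]
      abel


/-- Claim `4Q`. Let `N` be a strictly convex norm on `ℝ²` and let
`τ : C_X → C_X` be a surjective self-isometry of a convex Jordan curve `C_X ⊆ ℝ²`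
satisfying `τ a - τ b = a - b` whenever `a, b ∈ C_X` lie on a common horizontal or
vertical line. Let `A, B : ℤ → ℝ²` be orbits of `a` and `b` under the process of
reflecting along coordinate lines of `C_X`. If there are indices `i₁,…,i₄`, `j₁,…,j₄`
with `A iₖ - B jₖ` in the open `k`-th quadrant for `k = 1, 2, 3, 4`, then
`τ a - τ b = a - b`. -/
theorem stmt15 (N : ℝ × ℝ → ℝ)
    (hN0 : ∀ p, N p = 0 ↔ p = 0)
    (hNneg : ∀ p, N (-p) = N p)
    (hNsmul : ∀ (r : ℝ) (p), N (r • p) = |r| * N p)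
    (hNadd : ∀ p q, N (p + q) ≤ N p + N q)
    (hstrict : ∀ p q, p ≠ 0 → q ≠ 0 → N (p + q) = N p + N q → ∃ r > (0:ℝ), q = r • p)
    (CX : Set (ℝ × ℝ))
    (hJordan : ∃ K : Set (ℝ × ℝ), IsCompact K ∧ Convex ℝ K ∧
      (interior K).Nonempty ∧ CX = frontier K)
    (τ : ℝ × ℝ → ℝ × ℝ)
    (hmap : Set.MapsTo τ CX CX) (hsurj : Set.SurjOn τ CX CX)
    (hiso : ∀ u ∈ CX, ∀ v ∈ CX, N (τ u - τ v) = N (u - v))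
    (hlines : ∀ u ∈ CX, ∀ v ∈ CX, (u.1 = v.1 ∨ u.2 = v.2) → τ u - τ v = u - v)
    (a b : ℝ × ℝ) (ha : a ∈ CX) (hb : b ∈ CX)
    (A B : ℤ → ℝ × ℝ) (hA0 : A 0 = a) (hB0 : B 0 = b)
    (hA : ∀ n : ℤ, A n ∈ CX ∧ ((A (n+1)).1 = (A n).1 ∨ (A (n+1)).2 = (A n).2))
    (hB : ∀ n : ℤ, B n ∈ CX ∧ ((B (n+1)).1 = (B n).1 ∨ (B (n+1)).2 = (B n).2))
    (i1 i2 i3 i4 j1 j2 j3 j4 : ℤ)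
    (hq1 : 0 < (A i1 - B j1).1 ∧ 0 < (A i1 - B j1).2)
    (hq2 : (A i2 - B j2).1 < 0 ∧ 0 < (A i2 - B j2).2)
    (hq3 : (A i3 - B j3).1 < 0 ∧ (A i3 - B j3).2 < 0)
    (hq4 : 0 < (A i4 - B j4).1 ∧ (A i4 - B j4).2 < 0) :
    τ a - τ b = a - b := by
  have hAc : ∀ n : ℤ, τ (A n) - A n = τ a - a := by
    intro n
    have h := orbit_invariant τ CX hlines A hA n
    rwa [hA0] at h
  have hBc : ∀ n : ℤ, τ (B n) - B n = τ b - b := by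
    intro n
    have h := orbit_invariant τ CX hlines B hB n
    rwa [hB0] at h
  set v : ℝ × ℝ := (τ a - a) - (τ b - b) with hvdef
  by_cases hv0 : v = 0
  · have e : τ a - τ b = v + (a - b) := by rw [hvdef]; abel
    rw [e, hv0, zero_add]
  · exfalso
    obtain ⟨φ, hφ⟩ := key_lemma N hN0 hNneg hNsmul hNadd hstrict v hv0
    have horb : ∀ i j : ℤ, N ((A i - B j) + v) = N (A i - B j) := by
      intro i j
      have h1 := hiso (A i) (hA i).1 (B j) (hB j).1
      have e : τ (A i) - τ (B j) = (A i - B j) + v := by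
        have e2 : τ (A i) - τ (B j)
            = (τ (A i) - A i) - (τ (B j) - B j) + (A i - B j) := by abel
        rw [e2, hAc i, hBc j, hvdef]
        abel
      rw [e] at h1
      exact h1
    rcases le_or_gt 0 φ.1 with h1 | h1 <;> rcases le_or_gt 0 φ.2 with h2 | h2
    · have hc := hφ (A i1 - B j1) (by nlinarith [hq1.1, hq1.2])
      exact absurd (horb i1 j1) (ne_of_gt hc)
    · have hc := hφ (A i4 - B j4) (by nlinarith [hq4.1, hq4.2])
      exact absurd (horb i4 j4) (ne_of_gt hc)
    · have hc := hφ (A i2 - B j2) (by nlinarith [hq2.1, hq2.2])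
      exact absurd (horb i2 j2) (ne_of_gt hc)
    · have hc := hφ (A i3 - B j3) (by nlinarith [hq3.1, hq3.2])
      exact absurd (horb i3 j3) (ne_of_gt hc)
end

section
/- Let X be a finite-dimensional normed space and x ∈ X \ {0}. The following are equivalent: (a) the norm is Gâteaux differentiable at x; (b) the norm is Fréchet differentiable at x; (c) the Birkhoff orthogonal complement x^⊥ = {y ∈ X : ‖x + λy‖ ≥ ‖x‖ for all λ ∈ ℝ} is a hyperplane (a linear subspace of codimension 1). -/
/-- Gâteaux differentiability of the norm at `x`: there is a linear functional `f`
giving all directional derivatives of the norm at `x`. -/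
def GateauxDifferentiableNormAt (X : Type*) [NormedAddCommGroup X] [NormedSpace ℝ X]
    (x : X) : Prop :=
  ∃ f : X →ₗ[ℝ] ℝ, ∀ y : X, HasDerivAt (fun t : ℝ => ‖x + t • y‖) (f y) 0

namespace Stmt17Aux

open Set Filter Module

variable {X : Type*} [NormedAddCommGroup X] [NormedSpace ℝ X]

/-- linear lower bound property -/
def LB (x y : X) (c : ℝ) : Prop := ∀ t : ℝ, ‖x‖ + c * t ≤ ‖x + t • y‖

lemma phi_convex (x y : X) : ConvexOn ℝ univ (fun t : ℝ => ‖x + t • y‖) := by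
  refine ⟨convex_univ, ?_⟩
  intro a _ b _ p q hp hq hpq
  have h : x + (p * a + q * b) • y = p • (x + a • y) + q • (x + b • y) := by
    have h1 : p • x + q • x = x := by rw [← add_smul, hpq, one_smul]
    rw [smul_add, smul_add]
    rw [show p • x + p • a • y + (q • x + q • b • y) = (p • x + q • x) + (p • a • y + q • b • y) by abel, h1]
    congr 1
    rw [smul_smul, smul_smul, ← add_smul]
  simp only [smul_eq_mul]
  rw [h]
  calc ‖p • (x + a • y) + q • (x + b • y)‖ ≤ ‖p • (x + a • y)‖ + ‖q • (x + b • y)‖ :=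
        norm_add_le _ _
    _ = p * ‖x + a • y‖ + q * ‖x + b • y‖ := by
        rw [norm_smul, norm_smul, Real.norm_of_nonneg hp, Real.norm_of_nonneg hq]

lemma slope_mono (x y : X) {s t : ℝ} (hs : s ≠ 0) (ht : t ≠ 0) (hst : s ≤ t) :
    (‖x + s • y‖ - ‖x‖) / s ≤ (‖x + t • y‖ - ‖x‖) / t := by
  have := (phi_convex x y).secant_mono (a := 0) (x := s) (y := t)
    (mem_univ _) (mem_univ _) (mem_univ _) hs ht hst
  simpa using this

lemma exists_lb (x y : X) : ∃ c, LB x y c := by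
  set S : Set ℝ := (fun t => (‖x + t • y‖ - ‖x‖) / t) '' Ioi 0 with hS
  have hne : S.Nonempty := ⟨_, ⟨1, by simp, rfl⟩⟩
  have hbdd : BddBelow S := by
    refine ⟨(‖x + (-1 : ℝ) • y‖ - ‖x‖) / (-1), ?_⟩
    rintro _ ⟨t, ht, rfl⟩
    exact slope_mono x y (by norm_num) (ne_of_gt ht) (by linarith [mem_Ioi.1 ht])
  refine ⟨sInf S, fun t => ?_⟩
  rcases lt_trichotomy t 0 with h | rfl | h
  · have hle : (‖x + t • y‖ - ‖x‖) / t ≤ sInf S := by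
      refine le_csInf hne ?_
      rintro _ ⟨u, hu, rfl⟩
      exact slope_mono x y (ne_of_lt h) (ne_of_gt hu) (le_of_lt (h.trans hu))
    rw [div_le_iff_of_neg h] at hle
    linarith
  · simp
  · have hle : sInf S ≤ (‖x + t • y‖ - ‖x‖) / t := csInf_le hbdd ⟨t, h, rfl⟩
    rw [le_div_iff₀ h] at hle
    linarith

lemma lb_of_hasDerivAt {x y : X} {c : ℝ}
    (h : HasDerivAt (fun t : ℝ => ‖x + t • y‖) c 0) : LB x y c := by
  have hT := hasDerivAt_iff_tendsto_slope.1 h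
  have hTp : Tendsto (slope (fun t : ℝ => ‖x + t • y‖) 0) (nhdsWithin 0 (Ioi 0)) (nhds c) :=
    hT.mono_left (nhdsWithin_mono 0 (fun u hu => ne_of_gt hu))
  have hTn : Tendsto (slope (fun t : ℝ => ‖x + t • y‖) 0) (nhdsWithin 0 (Iio 0)) (nhds c) :=
    hT.mono_left (nhdsWithin_mono 0 (fun u hu => ne_of_lt hu))
  have hsl : ∀ t : ℝ, slope (fun t : ℝ => ‖x + t • y‖) 0 t
      = (‖x + t • y‖ - ‖x‖) / t := by
    intro t
    simp [slope_def_field]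
  intro t
  rcases lt_trichotomy t 0 with h0 | rfl | h0
  · have : (‖x + t • y‖ - ‖x‖) / t ≤ c := by
      refine ge_of_tendsto hTp ?_
      filter_upwards [self_mem_nhdsWithin] with u hu
      rw [hsl u]
      exact slope_mono x y (ne_of_lt h0) (ne_of_gt hu) (le_of_lt (h0.trans hu))
    rw [div_le_iff_of_neg h0] at this; linarith
  · simp
  · have : c ≤ (‖x + t • y‖ - ‖x‖) / t := by
      refine le_of_tendsto hTn ?_
      filter_upwards [self_mem_nhdsWithin] with u hu
      rw [hsl u]
      exact slope_mono x y (ne_of_lt hu) (ne_of_gt h0) (le_of_lt (hu.trans h0))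
    rw [le_div_iff₀ h0] at this; linarith

lemma lb_abs_le {x y : X} {c : ℝ} (h : LB x y c) : |c| ≤ ‖y‖ := by
  have h1 := h 1
  have h2 := h (-1)
  have e1 : ‖x + (1:ℝ) • y‖ ≤ ‖x‖ + ‖y‖ := by
    simpa using norm_add_le x y
  have e2 : ‖x + (-1:ℝ) • y‖ ≤ ‖x‖ + ‖y‖ := by
    calc ‖x + (-1:ℝ) • y‖ ≤ ‖x‖ + ‖(-1:ℝ) • y‖ := norm_add_le _ _
      _ = ‖x‖ + ‖y‖ := by rw [norm_smul]; simp
  rw [abs_le]; constructor <;> nlinarith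

/-- LB implies Birkhoff membership of `y - s • x` where `c = s * ‖x‖`. -/
lemma mem_of_lb {x y : X} {s : ℝ} (h : LB x y (s * ‖x‖)) (l : ℝ) :
    ‖x + l • (y - s • x)‖ ≥ ‖x‖ := by
  set c := s * ‖x‖ with hc
  have key : x + l • (y - s • x) = (1 - l * s) • x + l • y := by
    rw [smul_sub, smul_smul, sub_smul, one_smul]
    abel
  rcases lt_trichotomy (1 - l * s) 0 with hls | hls | hls
  · -- 1 - l*s < 0
    set t := l / (1 - l * s) with htd
    have hne : (1 - l * s) ≠ 0 := ne_of_lt hls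
    have key2 : x + l • (y - s • x) = (1 - l * s) • (x + t • y) := by
      rw [key, smul_add, smul_smul, htd, mul_div_cancel₀ _ hne]
    rw [key2, norm_smul]
    have hlow : ‖x + t • y‖ ≥ |t| * ‖y‖ - ‖x‖ := by
      have h5 : ‖t • y‖ ≤ ‖x + t • y‖ + ‖x‖ := by
        calc ‖t • y‖ = ‖(x + t • y) + (-x)‖ := by rw [show (x + t • y) + (-x) = t • y from by abel]
          _ ≤ ‖x + t • y‖ + ‖-x‖ := norm_add_le _ _
          _ = ‖x + t • y‖ + ‖x‖ := by rw [norm_neg]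
      rw [norm_smul, Real.norm_eq_abs] at h5
      linarith
    have habs : |t| = |l| / (l * s - 1) := by
      rw [htd, abs_div, abs_of_neg hls]
      ring_nf
    have hcy : |c| ≤ ‖y‖ := lb_abs_le h
    have h1 : ‖(1 - l * s)‖ = l * s - 1 := by
      rw [Real.norm_eq_abs, abs_of_neg hls]; ring
    rw [h1]
    have hgoal : (l * s - 1) * (|t| * ‖y‖ - ‖x‖) ≥ ‖x‖ := by
      rw [habs]
      have hpos : (0:ℝ) < l * s - 1 := by linarith
      have hcan : (l * s - 1) * (|l| / (l * s - 1) * ‖y‖ - ‖x‖)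
          = |l| * ‖y‖ - (l * s - 1) * ‖x‖ := by
        field_simp
      rw [hcan]
      have h2 : |l| * ‖y‖ ≥ |l| * |c| := by
        exact mul_le_mul_of_nonneg_left hcy (abs_nonneg l)
      have h3 : |l| * |c| ≥ l * c := by
        calc l * c ≤ |l * c| := le_abs_self _
          _ = |l| * |c| := abs_mul l c
      have h4 : l * c = l * s * ‖x‖ := by rw [hc]; ring
      nlinarith [norm_nonneg x]
    calc ‖x‖ ≤ (l * s - 1) * (|t| * ‖y‖ - ‖x‖) := hgoal
      _ ≤ (l * s - 1) * ‖x + t • y‖ := by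
          apply mul_le_mul_of_nonneg_left (by linarith [hlow]) (by linarith)
  · -- 1 - l*s = 0
    have hls' : l * s = 1 := by linarith
    have hl : l ≠ 0 := by rintro rfl; simp at hls'
    have key2 : x + l • (y - s • x) = l • y := by
      rw [key, ← hls']; simp [hls']
    rw [key2, norm_smul, Real.norm_eq_abs]
    have hcy : |c| ≤ ‖y‖ := lb_abs_le h
    have h4 : l * c = l * s * ‖x‖ := by rw [hc]; ring
    rw [hls', one_mul] at h4
    calc ‖x‖ = l * c := h4.symm
      _ ≤ |l * c| := le_abs_self _
      _ = |l| * |c| := abs_mul l c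
      _ ≤ |l| * ‖y‖ := mul_le_mul_of_nonneg_left hcy (abs_nonneg l)
  · -- 1 - l*s > 0
    set t := l / (1 - l * s) with htd
    have hne : (1 - l * s) ≠ 0 := ne_of_gt hls
    have key2 : x + l • (y - s • x) = (1 - l * s) • (x + t • y) := by
      rw [key, smul_add, smul_smul, htd, mul_div_cancel₀ _ hne]
    rw [key2, norm_smul, Real.norm_eq_abs, abs_of_pos hls]
    have hlb := h t
    have : (1 - l * s) * (‖x‖ + c * t) ≤ (1 - l * s) * ‖x + t • y‖ :=
      mul_le_mul_of_nonneg_left hlb (le_of_lt hls)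
    have hct : (1 - l * s) * (c * t) = c * l := by
      rw [htd]; field_simp
    have expand : (1 - l * s) * (‖x‖ + c * t) = (1 - l * s) * ‖x‖ + (1 - l * s) * (c * t) := by
      ring
    have e : (1 - l * s) * ‖x‖ + c * l = ‖x‖ := by rw [hc]; ring
    linarith

/-- Birkhoff membership of `y - s • x` implies LB. -/
lemma lb_of_mem {x y : X} {s : ℝ} (h : ∀ l : ℝ, ‖x + l • (y - s • x)‖ ≥ ‖x‖) :
    LB x y (s * ‖x‖) := by
  intro t
  rcases le_or_gt (1 + t * s) 0 with hts | hts
  · have : s * ‖x‖ * t ≤ -‖x‖ := by nlinarith [norm_nonneg x]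
    have := norm_nonneg (x + t • y)
    linarith
  · set l := t / (1 + t * s) with hld
    have hne : (1 + t * s) ≠ 0 := ne_of_gt hts
    have h1 : 1 - l * s = 1 / (1 + t * s) := by rw [hld]; field_simp; ring
    have h2 : l = (1 / (1 + t * s)) * t := by rw [hld]; field_simp
    have key : x + l • (y - s • x) = (1 / (1 + t * s)) • (x + t • y) := by
      have k1 : x + l • (y - s • x) = (1 - l * s) • x + l • y := by
        rw [smul_sub, smul_smul, sub_smul, one_smul]; abel
      have k2 : (1 / (1 + t * s)) • (x + t • y) = (1 - l * s) • x + l • y := by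
        rw [h1, h2, smul_add, smul_smul]
      rw [k1, k2]
    have hmem := h l
    rw [key, norm_smul, Real.norm_eq_abs, abs_of_pos (by positivity : (0:ℝ) < 1 / (1 + t * s))]
      at hmem
    have h6 : (1 + t * s) * (1 / (1 + t * s) * ‖x + t • y‖) = ‖x + t • y‖ := by
      field_simp
    have h7 := mul_le_mul_of_nonneg_left hmem (le_of_lt hts)
    rw [h6] at h7
    nlinarith [norm_nonneg x]

lemma hasDerivAt_of_lb {x y : X} {c : ℝ} (hc : LB x y c)
    (huniq : ∀ c', LB x y c' → c' = c) :
    HasDerivAt (fun t : ℝ => ‖x + t • y‖) c 0 := by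
  have hsl : ∀ t : ℝ, slope (fun t : ℝ => ‖x + t • y‖) 0 t
      = (‖x + t • y‖ - ‖x‖) / t := by
    intro t; simp [slope_def_field]
  rw [hasDerivAt_iff_tendsto_slope, ← nhdsLT_sup_nhdsGT (0:ℝ), tendsto_sup]
  constructor
  · rw [Metric.tendsto_nhds]
    intro ε hε
    have hne : ¬ LB x y (c - ε / 2) := fun hlb => by
      have := huniq _ hlb; linarith
    rw [LB] at hne; push_neg at hne
    obtain ⟨t1, ht1⟩ := hne
    have ht1neg : t1 < 0 := by
      rcases lt_trichotomy t1 0 with h | h | h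
      · exact h
      · exfalso; rw [h] at ht1; simp at ht1
      · exfalso
        have := hc t1
        nlinarith
    have hslope1 : c - ε / 2 < (‖x + t1 • y‖ - ‖x‖) / t1 := by
      rw [lt_div_iff_of_neg ht1neg]
      nlinarith [ht1]
    filter_upwards [Ioo_mem_nhdsLT ht1neg] with t ht
    rw [hsl t]
    have hub : (‖x + t • y‖ - ‖x‖) / t ≤ c := by
      have := hc t
      rw [div_le_iff_of_neg ht.2]
      linarith
    have hlbd : c - ε / 2 < (‖x + t • y‖ - ‖x‖) / t :=
      lt_of_lt_of_le hslope1
        (slope_mono x y (ne_of_lt ht1neg) (ne_of_lt ht.2) (le_of_lt ht.1))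
    rw [Real.dist_eq, abs_lt]
    constructor <;> linarith
  · rw [Metric.tendsto_nhds]
    intro ε hε
    have hne : ¬ LB x y (c + ε / 2) := fun hlb => by
      have := huniq _ hlb; linarith
    rw [LB] at hne; push_neg at hne
    obtain ⟨t1, ht1⟩ := hne
    have ht1pos : 0 < t1 := by
      rcases lt_trichotomy t1 0 with h | h | h
      · exfalso
        have := hc t1
        nlinarith
      · exfalso; rw [h] at ht1; simp at ht1
      · exact h
    have hslope1 : (‖x + t1 • y‖ - ‖x‖) / t1 < c + ε / 2 := by
      rw [div_lt_iff₀ ht1pos]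
      nlinarith [ht1]
    filter_upwards [Ioo_mem_nhdsGT ht1pos] with t ht
    rw [hsl t]
    have hub : c ≤ (‖x + t • y‖ - ‖x‖) / t := by
      have := hc t
      rw [le_div_iff₀ ht.1]
      linarith
    have hlbd : (‖x + t • y‖ - ‖x‖) / t < c + ε / 2 :=
      lt_of_le_of_lt
        (slope_mono x y (ne_of_gt ht.1) (ne_of_gt ht1pos) (le_of_lt ht.2)) hslope1
    rw [Real.dist_eq, abs_lt]
    constructor <;> linarith

lemma frechet_of_gateaux [FiniteDimensional ℝ X] {x : X} (hx : x ≠ 0)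
    (h : GateauxDifferentiableNormAt X x) :
    DifferentiableAt ℝ (fun z : X => ‖z‖) x := by
  obtain ⟨f, hf⟩ := h
  set F := LinearMap.toContinuousLinearMap f with hFdef
  have hFf : ∀ v : X, F v = f v := fun v => by
    rw [hFdef, LinearMap.coe_toContinuousLinearMap']
  set g : X → ℝ := fun h => ‖x + h‖ - ‖x‖ - f h with hgdef
  have hg0 : g 0 = 0 := by simp [hgdef]
  have hgnn : ∀ v, 0 ≤ g v := by
    intro v
    have := lb_of_hasDerivAt (hf v) 1
    simp only [one_smul, mul_one] at this
    simp only [hgdef]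
    linarith
  have hglip : ∀ a b : X, g a ≤ g b + (1 + ‖F‖) * ‖a - b‖ := by
    intro a b
    have h1 : ‖x + a‖ - ‖x + b‖ ≤ ‖a - b‖ := by
      have h3 := norm_sub_norm_le (x + a) (x + b)
      have h2 : (x + a) - (x + b) = a - b := by abel
      rw [h2] at h3
      exact h3
    have h2 : f b - f a ≤ ‖F‖ * ‖a - b‖ := by
      have e1 : f b - f a = F (b - a) := by rw [hFf, map_sub]
      have e2 : F (b - a) ≤ ‖F (b - a)‖ := le_abs_self _
      have e3 : ‖F (b - a)‖ ≤ ‖F‖ * ‖b - a‖ := F.le_opNorm _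
      rw [norm_sub_rev] at e3
      linarith
    have expand : g a - g b = (‖x + a‖ - ‖x + b‖) + (f b - f a) := by
      simp only [hgdef]; ring
    have e4 : (1 + ‖F‖) * ‖a - b‖ = ‖a - b‖ + ‖F‖ * ‖a - b‖ := by ring
    linarith
  have hconv : ∀ (v : X) (t : ℝ), 0 ≤ t → t ≤ 1 → g (t • v) ≤ t * g v := by
    intro v t ht0 ht1
    have hid : x + t • v = t • (x + v) + (1 - t) • x := by
      rw [smul_add, sub_smul, one_smul]; abel
    have hb : ‖x + t • v‖ ≤ t * ‖x + v‖ + (1 - t) * ‖x‖ := by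
      rw [hid]
      calc ‖t • (x + v) + (1 - t) • x‖ ≤ ‖t • (x + v)‖ + ‖(1 - t) • x‖ := norm_add_le _ _
        _ = t * ‖x + v‖ + (1 - t) * ‖x‖ := by
            rw [norm_smul, norm_smul, Real.norm_of_nonneg ht0,
              Real.norm_of_nonneg (by linarith)]
    have hfs : f (t • v) = t * f v := by rw [map_smul, smul_eq_mul]
    simp only [hgdef, hfs]
    linarith
  have hsmall : ∀ u : X, ∀ ε : ℝ, 0 < ε → ∃ δ, 0 < δ ∧ g (δ • u) ≤ ε * δ := by
    intro u ε hε
    have hT := hasDerivAt_iff_tendsto_slope.1 (hf u)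
    have hTp : Filter.Tendsto (slope (fun t : ℝ => ‖x + t • u‖) 0)
        (nhdsWithin 0 (Ioi 0)) (nhds (f u)) :=
      hT.mono_left (nhdsWithin_mono 0 (fun a ha => ne_of_gt ha))
    have hev : ∀ᶠ t in nhdsWithin (0:ℝ) (Ioi 0),
        slope (fun t : ℝ => ‖x + t • u‖) 0 t ∈ Iio (f u + ε) :=
      hTp.eventually (Iio_mem_nhds (by linarith))
    obtain ⟨δ, hδ1, hδ2⟩ := (hev.and self_mem_nhdsWithin).exists
    refine ⟨δ, hδ2, ?_⟩
    rw [mem_Iio, slope_def_field] at hδ1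
    have hδpos : (0:ℝ) < δ := hδ2
    have : (‖x + δ • u‖ - ‖x + (0:ℝ) • u‖) / (δ - 0) < f u + ε := hδ1
    rw [zero_smul, add_zero, sub_zero, div_lt_iff₀ hδpos] at this
    have hfs : f (δ • u) = δ * f u := by rw [map_smul, smul_eq_mul]
    simp only [hgdef, hfs]
    nlinarith
  have main : ∀ ε : ℝ, 0 < ε → ∃ δ, 0 < δ ∧ ∀ v : X, ‖v‖ < δ → g v ≤ ε * ‖v‖ := by
    intro ε hε
    set L := 1 + ‖F‖ with hL
    have hLpos : 0 < L := by positivity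
    set r := ε / (2 * L) with hr
    have hrpos : 0 < r := by positivity
    have hchoice : ∀ u : X, ∃ δ, 0 < δ ∧ g (δ • u) ≤ ε / 2 * δ :=
      fun u => hsmall u (ε / 2) (by positivity)
    choose D hD1 hD2 using hchoice
    have hcover : Metric.sphere (0:X) 1 ⊆ ⋃ u ∈ Metric.sphere (0:X) 1, Metric.ball u r :=
      fun u hu => Set.mem_biUnion hu (Metric.mem_ball_self hrpos)
    obtain ⟨b, hbsub, hbfin, hbcover⟩ :=
      (isCompact_sphere (0:X) 1).elim_finite_subcover_image
        (fun u _ => Metric.isOpen_ball) hcover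
    have hsne : (Metric.sphere (0:X) 1).Nonempty := by
      refine ⟨‖x‖⁻¹ • x, ?_⟩
      rw [mem_sphere_zero_iff_norm, norm_smul, Real.norm_eq_abs, abs_inv, abs_norm]
      exact inv_mul_cancel₀ (norm_ne_zero_iff.2 hx)
    obtain ⟨u0, hu0⟩ := hsne
    obtain ⟨u1, hu1b, -⟩ := Set.mem_iUnion₂.1 (hbcover hu0)
    have hbne : hbfin.toFinset.Nonempty := ⟨u1, hbfin.mem_toFinset.2 hu1b⟩
    set δ := hbfin.toFinset.inf' hbne D with hδdef
    have hδpos : 0 < δ := by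
      rw [hδdef, Finset.lt_inf'_iff]
      intro u _; exact hD1 u
    refine ⟨δ, hδpos, ?_⟩
    intro v hv
    rcases eq_or_ne v 0 with rfl | hv0
    · simp [hg0]
    · have hvn : 0 < ‖v‖ := norm_pos_iff.2 hv0
      set u' := ‖v‖⁻¹ • v with hu'def
      have hu' : u' ∈ Metric.sphere (0:X) 1 := by
        rw [mem_sphere_zero_iff_norm, hu'def, norm_smul, Real.norm_eq_abs, abs_inv, abs_norm]
        exact inv_mul_cancel₀ (ne_of_gt hvn)
      obtain ⟨u, hub, huball⟩ := Set.mem_iUnion₂.1 (hbcover hu')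
      have hvu' : ‖v‖ • u' = v := by
        rw [hu'def, smul_smul, mul_inv_cancel₀ (ne_of_gt hvn), one_smul]
      have hvδ : ‖v‖ ≤ D u :=
        le_of_lt (lt_of_lt_of_le hv (Finset.inf'_le D (hbfin.mem_toFinset.2 hub)))
      have hdist : ‖v - ‖v‖ • u‖ ≤ ‖v‖ * r := by
        have e1 : v - ‖v‖ • u = ‖v‖ • (u' - u) := by rw [smul_sub, hvu']
        rw [e1, norm_smul, Real.norm_of_nonneg hvn.le]
        have : ‖u' - u‖ < r := by rw [← dist_eq_norm]; exact Metric.mem_ball.1 huball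
        nlinarith
      have s1 : g v ≤ g (‖v‖ • u) + L * (‖v‖ * r) := by
        have h1 := hglip v (‖v‖ • u)
        have h2 : L * ‖v - ‖v‖ • u‖ ≤ L * (‖v‖ * r) :=
          mul_le_mul_of_nonneg_left hdist hLpos.le
        linarith
      have s2 : g (‖v‖ • u) ≤ ε / 2 * ‖v‖ := by
        have hDne : D u ≠ 0 := ne_of_gt (hD1 u)
        have ht0 : 0 ≤ ‖v‖ / D u := div_nonneg hvn.le (hD1 u).le
        have ht1 : ‖v‖ / D u ≤ 1 := (div_le_one (hD1 u)).2 hvδ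
        have hsm : (‖v‖ / D u) • (D u • u) = ‖v‖ • u := by
          rw [smul_smul, div_mul_cancel₀ _ (ne_of_gt (hD1 u))]
        have h3 := hconv (D u • u) (‖v‖ / D u) ht0 ht1
        rw [hsm] at h3
        have h4 : ‖v‖ / D u * g (D u • u) ≤ ‖v‖ / D u * (ε / 2 * D u) :=
          mul_le_mul_of_nonneg_left (hD2 u) ht0
        have h5 : ‖v‖ / D u * (ε / 2 * D u) = ε / 2 * ‖v‖ := by
          field_simp
        linarith
      have hLne : L ≠ 0 := ne_of_gt hLpos
      have hLr : L * r = ε / 2 := by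
        rw [hr]
        field_simp
      have e6 : L * (‖v‖ * r) = ε / 2 * ‖v‖ := by
        rw [show L * (‖v‖ * r) = L * r * ‖v‖ from by ring, hLr]
      calc g v ≤ g (‖v‖ • u) + L * (‖v‖ * r) := s1
        _ ≤ ε / 2 * ‖v‖ + ε / 2 * ‖v‖ := add_le_add s2 e6.le
        _ = ε * ‖v‖ := by ring
  have hFder : HasFDerivAt (fun z : X => ‖z‖) F x := by
    rw [hasFDerivAt_iff_isLittleO_nhds_zero, Asymptotics.isLittleO_iff]
    intro c hc
    obtain ⟨δ, hδ, hδ2⟩ := main c hc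
    rw [Metric.eventually_nhds_iff]
    refine ⟨δ, hδ, fun v hv => ?_⟩
    rw [dist_zero_right] at hv
    have h6 := hδ2 v hv
    have h7 := hgnn v
    have h8 : ‖x + v‖ - ‖x‖ - F v = g v := by rw [hFf]
    rw [h8, Real.norm_eq_abs, abs_of_nonneg h7]
    exact h6
  exact hFder.differentiableAt

lemma gateaux_of_frechet {x : X}
    (h : DifferentiableAt ℝ (fun z : X => ‖z‖) x) :
    GateauxDifferentiableNormAt X x := by
  set F := fderiv ℝ (fun z : X => ‖z‖) x with hF
  refine ⟨F.toLinearMap, fun y => ?_⟩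
  have hc : HasDerivAt (fun t : ℝ => x + t • y) y 0 := by
    have h1 : HasDerivAt (fun t : ℝ => t • y) ((1:ℝ) • y) 0 := (hasDerivAt_id (0:ℝ)).smul_const y
    rw [one_smul] at h1
    exact h1.const_add x
  have hD : HasFDerivAt (fun z : X => ‖z‖) F x := h.hasFDerivAt
  have hx0 : x + (0:ℝ) • y = x := by simp
  have hD' : HasFDerivAt (fun z : X => ‖z‖) F (x + (0:ℝ) • y) := by rwa [hx0]
  have := hD'.comp_hasDerivAt (0:ℝ) hc
  exact this

lemma hyperplane_of_gateaux [FiniteDimensional ℝ X] {x : X} (hx : x ≠ 0)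
    (h : GateauxDifferentiableNormAt X x) :
    ∃ H : Submodule ℝ X, Module.finrank ℝ H + 1 = Module.finrank ℝ X ∧
      {y : X | ∀ l : ℝ, ‖x + l • y‖ ≥ ‖x‖} = (H : Set X) := by
  obtain ⟨f, hf⟩ := h
  have hfx : f x = ‖x‖ := by
    have h2 : HasDerivAt (fun t : ℝ => (1 + t) * ‖x‖) ‖x‖ 0 := by
      simpa using ((hasDerivAt_id (0:ℝ)).const_add 1).mul_const ‖x‖
    have h1 : HasDerivAt (fun t : ℝ => ‖x + t • x‖) ‖x‖ 0 := by
      apply h2.congr_of_eventuallyEq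
      filter_upwards [Ioo_mem_nhds (by norm_num : (-1:ℝ) < 0) (by norm_num : (0:ℝ) < 1)]
        with t ht
      rw [show x + t • x = (1 + t) • x from by rw [add_smul, one_smul], norm_smul,
        Real.norm_of_nonneg (by linarith [ht.1] : (0:ℝ) ≤ 1 + t)]
    exact (hf x).unique h1
  refine ⟨LinearMap.ker f, ?_, ?_⟩
  · have hrank := LinearMap.finrank_range_add_finrank_ker f
    have hsurj : Function.Surjective f := by
      intro r
      refine ⟨(r / ‖x‖) • x, ?_⟩
      rw [map_smul, smul_eq_mul, hfx, div_mul_cancel₀]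
      exact norm_ne_zero_iff.2 hx
    rw [LinearMap.range_eq_top.2 hsurj] at hrank
    rw [finrank_top, Module.finrank_self] at hrank
    omega
  · ext y
    simp only [Set.mem_setOf_eq, SetLike.mem_coe, LinearMap.mem_ker]
    constructor
    · intro hy
      have hmin : IsLocalMin (fun t : ℝ => ‖x + t • y‖) 0 := by
        apply Filter.Eventually.of_forall
        intro t
        simpa using hy t
      exact hmin.hasDerivAt_eq_zero (hf y)
    · intro hy l
      have := lb_of_hasDerivAt (hf y) l
      rw [hy] at this
      simpa using this

lemma gateaux_of_hyperplane {x : X} (hx : x ≠ 0)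
    (h : ∃ H : Submodule ℝ X, Module.finrank ℝ H + 1 = Module.finrank ℝ X ∧
      {y : X | ∀ l : ℝ, ‖x + l • y‖ ≥ ‖x‖} = (H : Set X)) :
    GateauxDifferentiableNormAt X x := by
  obtain ⟨H, -, hset⟩ := h
  have hnx : ‖x‖ ≠ 0 := norm_ne_zero_iff.2 hx
  have hxnot : x ∉ (H : Set X) := by
    rw [← hset]
    intro hmem
    have := hmem (-1)
    rw [show x + (-1 : ℝ) • x = 0 from by simp] at this
    simp only [norm_zero] at this
    exact hnx (le_antisymm (by exact_mod_cast this) (norm_nonneg x))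
  have memH : ∀ (y : X) (c : ℝ), LB x y c → y - (c / ‖x‖) • x ∈ H := by
    intro y c hc
    have hc' : LB x y ((c / ‖x‖) * ‖x‖) := by rwa [div_mul_cancel₀ _ hnx]
    have : y - (c / ‖x‖) • x ∈ {y : X | ∀ l : ℝ, ‖x + l • y‖ ≥ ‖x‖} :=
      fun l => mem_of_lb hc' l
    rwa [hset] at this
  have lbH : ∀ (y : X) (s : ℝ), y - s • x ∈ H → LB x y (s * ‖x‖) := by
    intro y s hm
    apply lb_of_mem
    intro l
    have : (y - s • x) ∈ {y : X | ∀ l : ℝ, ‖x + l • y‖ ≥ ‖x‖} := by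
      rw [hset]; exact hm
    exact this l
  have huniq : ∀ (y : X) (c c' : ℝ), LB x y c → LB x y c' → c = c' := by
    intro y c c' h1 h2
    by_contra hne
    have m1 := memH y c h1
    have m2 := memH y c' h2
    have hsub : (y - (c / ‖x‖) • x) - (y - (c' / ‖x‖) • x) ∈ H := H.sub_mem m1 m2
    have hid : (y - (c / ‖x‖) • x) - (y - (c' / ‖x‖) • x) = ((c' - c) / ‖x‖) • x := by
      rw [sub_div, sub_smul]
      abel
    rw [hid] at hsub
    have hne2 : (c' - c) / ‖x‖ ≠ 0 := by
      apply div_ne_zero _ hnx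
      intro h0
      apply hne
      linarith [sub_eq_zero.1 h0]
    have : x ∈ H := by
      have := H.smul_mem ((c' - c) / ‖x‖)⁻¹ hsub
      rwa [smul_smul, inv_mul_cancel₀ hne2, one_smul] at this
    exact hxnot this
  have hex : ∀ y : X, ∃ c, LB x y c := fun y => exists_lb x y
  choose d hd using hex
  refine ⟨{ toFun := d,
            map_add' := ?_,
            map_smul' := ?_ }, ?_⟩
  · intro y z
    have my := memH y (d y) (hd y)
    have mz := memH z (d z) (hd z)
    have msum := H.add_mem my mz
    have hid : (y - (d y / ‖x‖) • x) + (z - (d z / ‖x‖) • x)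
        = (y + z) - ((d y + d z) / ‖x‖) • x := by
      rw [add_div, add_smul]
      abel
    rw [hid] at msum
    have hlb := lbH (y + z) ((d y + d z) / ‖x‖) msum
    rw [div_mul_cancel₀ _ hnx] at hlb
    exact huniq (y + z) (d (y + z)) (d y + d z) (hd (y + z)) hlb
  · intro a y
    have my := memH y (d y) (hd y)
    have msc := H.smul_mem a my
    have hid : a • (y - (d y / ‖x‖) • x) = (a • y) - ((a * d y) / ‖x‖) • x := by
      rw [smul_sub, smul_smul, mul_div_assoc]
    rw [hid] at msc
    have hlb := lbH (a • y) ((a * d y) / ‖x‖) msc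
    rw [div_mul_cancel₀ _ hnx] at hlb
    simp only [RingHom.id_apply, smul_eq_mul]
    exact huniq (a • y) (d (a • y)) (a * d y) (hd (a • y)) hlb
  · intro y
    exact hasDerivAt_of_lb (hd y) (fun c' hc' => huniq y c' (d y) hc' (hd y))

end Stmt17Aux

/-- Lemma `GatoBir`, pointwise version. Let `X` be a
finite-dimensional real normed space and `x ≠ 0`. The following are equivalent:
(a) the norm is Gâteaux differentiable at `x`; (b) the norm is Fréchet differentiable
at `x`; (c) the Birkhoff orthogonal complement
`x^⊥ = {y : ‖x + λ • y‖ ≥ ‖x‖ for all λ}` is a hyperplane (a linear subspace of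
codimension one). -/
theorem stmt17 {X : Type*} [NormedAddCommGroup X] [NormedSpace ℝ X]
    [FiniteDimensional ℝ X] (x : X) (hx : x ≠ 0) :
    (GateauxDifferentiableNormAt X x ↔ DifferentiableAt ℝ (fun z : X => ‖z‖) x) ∧
    (GateauxDifferentiableNormAt X x ↔
      ∃ H : Submodule ℝ X, Module.finrank ℝ H + 1 = Module.finrank ℝ X ∧
        {y : X | ∀ l : ℝ, ‖x + l • y‖ ≥ ‖x‖} = (H : Set X)) := by
  constructor
  · exact ⟨fun h => Stmt17Aux.frechet_of_gateaux hx h, fun h => Stmt17Aux.gateaux_of_frechet h⟩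
  · exact ⟨fun h => Stmt17Aux.hyperplane_of_gateaux hx h,
      fun h => Stmt17Aux.gateaux_of_hyperplane hx h⟩
end

section
/- Let f be a convex real-valued function on an open convex set A ⊂ ℝ^d. If f has all partial derivatives at each point of A, then f is continuously differentiable on A (f ∈ C¹(A)). -/
open Filter Set Metric Topology Asymptotics

private lemma subgrad {E : Type*} [NormedAddCommGroup E] [NormedSpace ℝ E]
    {A : Set E} {f : E → ℝ} (hf : ConvexOn ℝ A f) {x y : E} (hx : x ∈ A) (hy : y ∈ A)
    {L : E →L[ℝ] ℝ} (hL : HasFDerivAt f L x) : L (y - x) ≤ f y - f x := by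
  set φ : ℝ → ℝ := fun t => f (x + t • (y - x)) with hφ
  have hg : HasDerivAt (fun t : ℝ => x + t • (y - x)) (y - x) 0 := by
    simpa using ((hasDerivAt_id (0:ℝ)).smul_const (y - x)).const_add x
  have hL0 : HasFDerivAt f L ((fun t : ℝ => x + t • (y - x)) 0) := by simpa using hL
  have h1 : HasDerivAt φ (L (y - x)) 0 := by
    exact hL0.comp_hasDerivAt (0:ℝ) hg
  have h2 : Tendsto (slope φ 0) (𝓝[>] 0) (𝓝 (L (y - x))) :=
    (hasDerivAt_iff_tendsto_slope.1 h1).mono_left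
      (nhdsWithin_mono _ (fun t ht => by simpa using ne_of_gt ht))
  refine le_of_tendsto h2 ?_
  filter_upwards [Ioo_mem_nhdsGT_of_mem (by constructor <;> norm_num : (0:ℝ) ∈ Ico 0 1)]
    with t ht
  have hcl : φ t ≤ (1 - t) * f x + t * f y := by
    have := hf.2 hx hy (by linarith [ht.2] : (0:ℝ) ≤ 1 - t) ht.1.le (by ring)
    calc φ t = f ((1 - t) • x + t • y) := by
            rw [hφ]; congr 1; simp [smul_sub, sub_smul]; abel
      _ ≤ (1 - t) * f x + t * f y := by simpa using this
  rw [slope_def_field]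
  have hφ0 : φ 0 = f x := by simp [hφ]
  rw [sub_zero, div_le_iff₀ ht.1]
  nlinarith [ht.1, hcl]

private lemma abs_coord_le {d : ℕ} (w : EuclideanSpace ℝ (Fin d)) (i : Fin d) : |w i| ≤ ‖w‖ := by
  rw [EuclideanSpace.norm_eq, ← Real.sqrt_sq_eq_abs]
  apply Real.sqrt_le_sqrt
  calc w i ^ 2 = ‖w i‖ ^ 2 := by rw [Real.norm_eq_abs, sq_abs]
    _ ≤ ∑ j : Fin d, ‖w j‖^2 :=
      Finset.single_le_sum (f := fun j => ‖w j‖^2) (fun j _ => by positivity) (Finset.mem_univ i)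

private lemma decomp {d : ℕ} (w : EuclideanSpace ℝ (Fin d)) :
    ∑ i, w i • EuclideanSpace.single i (1:ℝ) = w := by
  ext j
  rw [WithLp.ofLp_sum, Finset.sum_apply]
  simp [EuclideanSpace.single_apply]

set_option maxHeartbeats 1600000 in
private lemma key_fderiv {d : ℕ} {A : Set (EuclideanSpace ℝ (Fin d))}
    {f : EuclideanSpace ℝ (Fin d) → ℝ}
    (hA : IsOpen A) (hf : ConvexOn ℝ A f) {x : EuclideanSpace ℝ (Fin d)} (hx : x ∈ A)
    {c : Fin d → ℝ}
    (hc : ∀ i, HasDerivAt (fun t : ℝ => f (x + t • EuclideanSpace.single i 1)) (c i) 0) :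
    HasFDerivAt f
      (∑ i, c i • (EuclideanSpace.proj i : EuclideanSpace ℝ (Fin d) →L[ℝ] ℝ)) x := by
  rcases Nat.eq_zero_or_pos d with hd | hd
  · subst hd
    haveI : Subsingleton (EuclideanSpace ℝ (Fin 0)) := by
      unfold EuclideanSpace; infer_instance
    simpa [Finset.univ_eq_empty] using hasFDerivAt_of_subsingleton f x
  have hd' : (0:ℝ) < d := by exact_mod_cast hd
  have hdne : (d:ℝ) ≠ 0 := ne_of_gt hd'
  set L : EuclideanSpace ℝ (Fin d) →L[ℝ] ℝ :=
    ∑ i, c i • (EuclideanSpace.proj i : EuclideanSpace ℝ (Fin d) →L[ℝ] ℝ) with hLdef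
  have hLz : ∀ z : EuclideanSpace ℝ (Fin d), L z = ∑ i, c i * z i := fun z => by
    simp [hLdef, ContinuousLinearMap.sum_apply]
  have hLs : ∀ (t : ℝ) (i : Fin d), L (t • EuclideanSpace.single i (1:ℝ)) = t * c i := by
    intro t i
    rw [hLz]
    rw [Finset.sum_eq_single i]
    · simp [EuclideanSpace.single_apply, mul_comm]
    · intro j _ hj
      have h0 : (t • EuclideanSpace.single i (1:ℝ) : EuclideanSpace ℝ (Fin d)) j = 0 := by
        simp [EuclideanSpace.single_apply, hj]
      rw [h0, mul_zero]
    · simp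
  rw [hasFDerivAt_iff_isLittleO_nhds_zero, isLittleO_iff]
  intro ε hε
  obtain ⟨R, hR0, hRA⟩ := Metric.isOpen_iff.1 hA x hx
  set g : EuclideanSpace ℝ (Fin d) → ℝ := fun z => f (x + z) - f x - L z with hgdef
  have hsm : ∀ i, ∀ᶠ t : ℝ in 𝓝 0,
      |g (t • EuclideanSpace.single i 1)| ≤ ε/(2*d) * |t| := by
    intro i
    have h2 := (hasDerivAt_iff_isLittleO.1 (hc i)).def (c := ε/(2*d)) (by positivity)
    filter_upwards [h2] with t ht
    have : g (t • EuclideanSpace.single i 1)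
        = f (x + t • EuclideanSpace.single i 1) - f (x + (0:ℝ) • EuclideanSpace.single i 1)
          - (t - 0) • c i := by
      simp [hgdef, hLs, smul_eq_mul]
    rw [this]
    simpa using ht
  obtain ⟨δ, hδ0, hδ⟩ := Metric.eventually_nhds_iff.1 (eventually_all.2 hsm)
  set r : ℝ := min (δ / d) (R / d) with hrdef
  have hr0 : 0 < r := lt_min (by positivity) (by positivity)
  have main : ∀ w : EuclideanSpace ℝ (Fin d), ‖w‖ < r → g w ≤ ε/2 * ‖w‖ := by
    intro w hw
    have hbound : ∀ i : Fin d, (d:ℝ) * |w i| < min δ R := by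
      intro i
      have h1 : |w i| ≤ ‖w‖ := abs_coord_le w i
      have h2 : (d:ℝ) * ‖w‖ < d * r := by
        exact mul_lt_mul_of_pos_left hw hd'
      have h3 : (d:ℝ) * r ≤ δ := by
        have hm : r ≤ δ / d := min_le_left _ _
        have := mul_le_mul_of_nonneg_left hm hd'.le
        calc (d:ℝ) * r ≤ d * (δ/d) := this
          _ = δ := by field_simp
      have h4 : (d:ℝ) * r ≤ R := by
        have hm : r ≤ R / d := min_le_right _ _
        have := mul_le_mul_of_nonneg_left hm hd'.le
        calc (d:ℝ) * r ≤ d * (R/d) := this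
          _ = R := by field_simp
      have : (d:ℝ) * |w i| ≤ d * ‖w‖ := mul_le_mul_of_nonneg_left h1 hd'.le
      exact lt_min (by linarith) (by linarith)
    set p : Fin d → EuclideanSpace ℝ (Fin d) :=
      fun i => x + ((d:ℝ) * w i) • EuclideanSpace.single i (1:ℝ) with hpdef
    have hnorms : ∀ i, ‖((d:ℝ) * w i) • EuclideanSpace.single i (1:ℝ)‖ = (d:ℝ) * |w i| := by
      intro i
      rw [norm_smul, EuclideanSpace.norm_single]
      simp [abs_mul, abs_of_nonneg hd'.le]
    have hmem : ∀ i, p i ∈ A := by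
      intro i
      apply hRA
      rw [mem_ball, hpdef, dist_eq_norm]
      simpa [hnorms i] using lt_of_lt_of_le (hbound i) (min_le_right _ _)
    have hsum : ∑ i, (1/(d:ℝ)) • p i = x + w := by
      rw [hpdef]
      simp only [smul_add]
      rw [Finset.sum_add_distrib]
      congr 1
      · simp [Finset.sum_const, Finset.card_univ, ← Nat.cast_smul_eq_nsmul ℝ, smul_smul,
          mul_one_div, hdne]
      · calc ∑ i, (1/(d:ℝ)) • (((d:ℝ) * w i) • EuclideanSpace.single i (1:ℝ))
              = ∑ i, w i • EuclideanSpace.single i (1:ℝ) := by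
                apply Finset.sum_congr rfl
                intro i _
                rw [smul_smul]
                congr 1
                field_simp
          _ = w := decomp w
    have hjens : f (x + w) ≤ ∑ i, (1/(d:ℝ)) * f (p i) := by
      rw [← hsum]
      exact hf.map_sum_le (fun i _ => by positivity)
        (by simp [Finset.sum_const, Finset.card_univ, hdne]) (fun i _ => hmem i)
    have hLw : L w = ∑ i, (1/(d:ℝ)) * (((d:ℝ) * w i) * c i) := by
      rw [hLz]
      apply Finset.sum_congr rfl
      intro i _
      field_simp
    have hterm : ∀ i : Fin d, g (((d:ℝ) * w i) • EuclideanSpace.single i (1:ℝ))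
        ≤ ε/(2*d) * ((d:ℝ) * |w i|) := by
      intro i
      have hdist : dist ((d:ℝ) * w i) 0 < δ := by
        rw [Real.dist_eq, sub_zero]
        calc |(d:ℝ) * w i| = (d:ℝ) * |w i| := by rw [abs_mul, abs_of_nonneg hd'.le]
          _ < min δ R := hbound i
          _ ≤ δ := min_le_left _ _
      have := hδ hdist i
      calc g (((d:ℝ) * w i) • EuclideanSpace.single i (1:ℝ))
          ≤ |g (((d:ℝ) * w i) • EuclideanSpace.single i (1:ℝ))| := le_abs_self _
        _ ≤ ε/(2*d) * |(d:ℝ) * w i| := this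
        _ = ε/(2*d) * ((d:ℝ) * |w i|) := by rw [abs_mul, abs_of_nonneg hd'.le]
    have hgsum : g w ≤ ∑ i, (1/(d:ℝ)) * g (((d:ℝ) * w i) • EuclideanSpace.single i (1:ℝ)) := by
      have hfx : f x = ∑ _i : Fin d, (1/(d:ℝ)) * f x := by
        rw [Finset.sum_const, Finset.card_univ, Fintype.card_fin, nsmul_eq_mul]
        field_simp
      calc g w = f (x + w) - f x - L w := rfl
        _ ≤ (∑ i, (1/(d:ℝ)) * f (p i)) - (∑ i, (1/(d:ℝ)) * f x)
              - ∑ i, (1/(d:ℝ)) * (((d:ℝ) * w i) * c i) := by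
            rw [← hfx, ← hLw]; linarith [hjens]
        _ = ∑ i, (1/(d:ℝ)) * (f (p i) - f x - ((d:ℝ) * w i) * c i) := by
            rw [← Finset.sum_sub_distrib, ← Finset.sum_sub_distrib]
            apply Finset.sum_congr rfl; intro i _; ring
        _ = ∑ i, (1/(d:ℝ)) * g (((d:ℝ) * w i) • EuclideanSpace.single i (1:ℝ)) := by
            apply Finset.sum_congr rfl; intro i _
            congr 1
            simp [hgdef, hpdef, hLs]
    calc g w ≤ ∑ i, (1/(d:ℝ)) * g (((d:ℝ) * w i) • EuclideanSpace.single i (1:ℝ)) := hgsum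
      _ ≤ ∑ i, (1/(d:ℝ)) * (ε/(2*d) * ((d:ℝ) * |w i|)) := by
          apply Finset.sum_le_sum
          intro i _
          exact mul_le_mul_of_nonneg_left (hterm i) (by positivity)
      _ = ∑ i, (ε/(2*d)) * |w i| := by
          apply Finset.sum_congr rfl; intro i _; field_simp
      _ ≤ ∑ i : Fin d, (ε/(2*d)) * ‖w‖ := by
          apply Finset.sum_le_sum
          intro i _
          exact mul_le_mul_of_nonneg_left (abs_coord_le w i) (by positivity)
      _ = ε/2 * ‖w‖ := by
          rw [Finset.sum_const, Finset.card_univ]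
          simp [Fintype.card_fin, nsmul_eq_mul]
          field_simp
  filter_upwards [ball_mem_nhds (0 : EuclideanSpace ℝ (Fin d)) hr0] with z hz
  rw [mem_ball_zero_iff] at hz
  have h1 : g z ≤ ε/2 * ‖z‖ := main z hz
  have h2 : g (-z) ≤ ε/2 * ‖z‖ := by simpa using main (-z) (by simpa using hz)
  have hmemz : x + z ∈ A := by
    apply hRA; rw [mem_ball, dist_eq_norm, add_sub_cancel_left]
    calc ‖z‖ < r := hz
      _ ≤ R / d := min_le_right _ _
      _ ≤ R := div_le_self hR0.le (by exact_mod_cast hd)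
  have hmemz' : x + -z ∈ A := by
    apply hRA; rw [mem_ball, dist_eq_norm, add_sub_cancel_left, norm_neg]
    calc ‖z‖ < r := hz
      _ ≤ R / d := min_le_right _ _
      _ ≤ R := div_le_self hR0.le (by exact_mod_cast hd)
  have hmid : f x ≤ (1/2) * f (x + z) + (1/2) * f (x + -z) := by
    have := hf.2 hmemz hmemz' (by norm_num : (0:ℝ) ≤ 1/2) (by norm_num : (0:ℝ) ≤ 1/2)
      (by norm_num)
    have heq : (1/2 : ℝ) • (x + z) + (1/2 : ℝ) • (x + -z) = x := by
      module
    rw [heq] at this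
    simpa using this
  have hglb : -(g (-z)) ≤ g z := by
    have hLneg : L (-z) = - L z := map_neg L z
    have e1 : g z = f (x + z) - f x - L z := rfl
    have e2 : g (-z) = f (x + -z) - f x - L (-z) := rfl
    rw [e1, e2, hLneg]
    linarith [hmid]
  have hlow : -(ε/2 * ‖z‖) ≤ g z := le_trans (neg_le_neg h2) hglb
  have : |g z| ≤ ε/2 * ‖z‖ := abs_le.2 ⟨hlow, h1⟩
  calc ‖f (x + z) - f x - L z‖ = |g z| := by rw [Real.norm_eq_abs]
    _ ≤ ε/2 * ‖z‖ := this
    _ ≤ ε * ‖z‖ := by nlinarith [norm_nonneg z, hε]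

/-- Rockafellar, Theorem 25.2 + Corollary 25.5.1. Let `f` be a
convex real-valued function on an open convex set `A ⊆ ℝ^d`. If `f` has all `d` partial
derivatives at each point of `A`, then `f` is continuously differentiable on `A`. -/
theorem stmt18 {d : ℕ} (A : Set (EuclideanSpace ℝ (Fin d))) (f : EuclideanSpace ℝ (Fin d) → ℝ)
    (hA : IsOpen A) (hAconv : Convex ℝ A) (hf : ConvexOn ℝ A f)
    (hpartial : ∀ x ∈ A, ∀ i : Fin d, ∃ c : ℝ,
      HasDerivAt (fun t : ℝ => f (x + t • EuclideanSpace.single i 1)) c 0) :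
    ContDiffOn ℝ 1 f A := by
  choose! c hc using hpartial
  have hdiff : ∀ x ∈ A, HasFDerivAt f (fderiv ℝ f x) x := by
    intro x hx
    exact (key_fderiv hA hf hx (hc x hx)).differentiableAt.hasFDerivAt
  have hcont : ContinuousOn (fderiv ℝ f) A := by
    intro x hx
    apply ContinuousAt.continuousWithinAt
    rw [Metric.continuousAt_iff]
    intro ε hε
    obtain ⟨R, hR0, hRA⟩ := Metric.isOpen_iff.1 hA x hx
    set L := fderiv ℝ f x with hLdef
    have hlo := (hasFDerivAt_iff_isLittleO_nhds_zero.1 (hdiff x hx)).def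
      (c := ε/4) (by positivity)
    obtain ⟨δ, hδ0, hδ⟩ := Metric.eventually_nhds_iff.1 hlo
    set r : ℝ := min (δ/3) (R/3) with hrdef
    have hr0 : 0 < r := lt_min (by positivity) (by positivity)
    have hrδ : 3 * r ≤ δ := by
      have : r ≤ δ/3 := min_le_left _ _
      linarith
    have hrR : 3 * r ≤ R := by
      have : r ≤ R/3 := min_le_right _ _
      linarith
    refine ⟨r, hr0, ?_⟩
    intro y hyx
    rw [dist_eq_norm] at hyx
    have hyA : y ∈ A := by
      apply hRA
      rw [mem_ball, dist_eq_norm]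
      linarith
    set L' := fderiv ℝ f y with hL'def
    -- key pointwise bound for z in the shell [r, 2r)
    have hshell : ∀ z : EuclideanSpace ℝ (Fin d), r ≤ ‖z‖ → ‖z‖ < 2*r →
        (L' - L) z ≤ ε/2 * ‖z‖ := by
      intro z hz1 hz2
      have hyzA : y + z ∈ A := by
        apply hRA
        rw [mem_ball, dist_eq_norm]
        calc ‖y + z - x‖ = ‖(y - x) + z‖ := by congr 1; abel
          _ ≤ ‖y - x‖ + ‖z‖ := norm_add_le _ _
          _ < r + 2*r := by linarith
          _ ≤ R := by linarith
      have hsub1 : L' ((y + z) - y) ≤ f (y + z) - f y :=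
        subgrad hf hyA hyzA (hdiff y hyA)
      rw [add_sub_cancel_left] at hsub1
      have hsub2 : L (y - x) ≤ f y - f x := subgrad hf hx hyA (hdiff x hx)
      have hg : ‖f (x + (y - x + z)) - f x - L (y - x + z)‖ ≤ ε/4 * ‖y - x + z‖ := by
        apply hδ
        rw [dist_zero_right]
        calc ‖y - x + z‖ ≤ ‖y - x‖ + ‖z‖ := norm_add_le _ _
          _ < r + 2*r := by linarith
          _ ≤ δ := by linarith
      have hgle : f (x + (y - x + z)) - f x - L (y - x + z) ≤ ε/4 * ‖y - x + z‖ :=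
        le_trans (le_abs_self _) (by rwa [Real.norm_eq_abs] at hg)
      have hxyz : x + (y - x + z) = y + z := by abel
      rw [hxyz] at hgle
      have hnorm : ‖y - x + z‖ ≤ ‖y - x‖ + ‖z‖ := norm_add_le _ _
      have hLsplit : L (y - x + z) = L (y - x) + L z := map_add L _ _
      have : (L' - L) z = L' z - L z := by simp
      rw [this]
      have h2z : ‖y - x‖ + ‖z‖ ≤ 2 * ‖z‖ := by linarith
      calc L' z - L z ≤ (f (y + z) - f y) - L z := by linarith
        _ = (f (y + z) - f x - L (y - x + z)) - (f y - f x - L (y - x)) := by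
            rw [hLsplit]; ring
        _ ≤ (f (y + z) - f x - L (y - x + z)) := by linarith
        _ ≤ ε/4 * ‖y - x + z‖ := hgle
        _ ≤ ε/4 * (2 * ‖z‖) := by
            apply mul_le_mul_of_nonneg_left _ (by positivity)
            linarith
        _ = ε/2 * ‖z‖ := by ring
    have hop : ‖L' - L‖ ≤ ε/2 := by
      apply ContinuousLinearMap.opNorm_le_of_shell (ε := 2*r) (c := (2:ℝ))
        (by linarith) (by positivity) (by rw [Real.norm_eq_abs, abs_two]; norm_num)
      intro z hz1 hz2
      have h22 : ‖(2:ℝ)‖ = 2 := by rw [Real.norm_eq_abs, abs_two]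
      rw [h22] at hz1
      have hz1' : r ≤ ‖z‖ := by
        have : 2*r/2 = r := by ring
        linarith
      have hzpos : 0 < ‖z‖ := lt_of_lt_of_le hr0 hz1'
      have ha := hshell z hz1' hz2
      have hb := hshell (-z) (by rwa [norm_neg]) (by rwa [norm_neg])
      rw [map_neg] at hb
      rw [Real.norm_eq_abs, abs_le]
      constructor
      · rw [norm_neg] at hb; linarith
      · exact ha
    rw [dist_eq_norm]
    calc ‖L' - L‖ ≤ ε/2 := hop
      _ < ε := by linarith
  have h01 : (1 : WithTop ℕ∞) = 0 + 1 := by norm_num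
  rw [h01, contDiffOn_succ_iff_fderiv_of_isOpen hA]
  refine ⟨fun x hx => (hdiff x hx).differentiableAt.differentiableWithinAt, ?_, ?_⟩
  · intro h
    simp at h
  · rw [contDiffOn_zero]
    exact hcont
end
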